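/- The coloring graph Ĝ admits a proper coloring using n colors if and only if there exists a saturating decodable stream assignment. Moreover, if c is any proper n-coloring of Ĝ, then the function f defined by f(j,k) = c(v_{j,k}) is a saturating decodable stream assignment. -/

import Mathlib

/-- Vertex type of the coloring graph `Ĝ`: the sink subgraph `V̂_j` consists of
`nj j` regular vertices (`Sum.inl`) and `n - nj j` fictitious vertices (`Sum.inr`). -/
abbrev ColoringVertex (t : ℕ) (nj : Fin t → ℕ) (n : ℕ) : Type :=
  (j : Fin t) × (Fin (nj j) ⊕ Fin (n - nj j))

/-- `cross R x y` holds when `x` is a regular vertex `v_{j,k}`, `y` is a fictitious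
vertex of a different sink subgraph `V̂_{j'}`, and the contamination relation
`R j k j'` holds. -/
def cross {t n : ℕ} {nj : Fin t → ℕ} (R : (j : Fin t) → Fin (nj j) → Fin t → Prop)
    (x y : ColoringVertex t nj n) : Prop :=
  x.1 ≠ y.1 ∧ (∃ k : Fin (nj x.1), x.2 = Sum.inl k ∧ R x.1 k y.1) ∧
    ∃ k' : Fin (n - nj y.1), y.2 = Sum.inr k'

/-- The coloring graph `Ĝ`: two distinct vertices in the same sink subgraph are
always adjacent; a regular vertex `v_{j,k}` is adjacent to every fictitious vertex
of `V̂_{j'}` (for `j' ≠ j`) iff `R j k j'`; there are no other adjacencies. -/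
def coloringGraph (t n : ℕ) (nj : Fin t → ℕ)
    (R : (j : Fin t) → Fin (nj j) → Fin t → Prop) :
    SimpleGraph (ColoringVertex t nj n) where
  Adj x y := x ≠ y ∧ (x.1 = y.1 ∨ cross R x y ∨ cross R y x)
  symm := by
    constructor
    rintro x y ⟨h1, h2⟩
    refine ⟨h1.symm, ?_⟩
    rcases h2 with h | h | h
    · exact Or.inl h.symm
    · exact Or.inr (Or.inr h)
    · exact Or.inr (Or.inl h)
  loopless := ⟨fun x h => h.1 rfl⟩

/-- A saturating decodable stream assignment: each path `(j,k)` gets a stream in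
`{1,…,n}` (modelled as `Fin n`), such that distinct paths to the same sink get
distinct streams (saturation), and whenever path `k` to sink `j` contaminates onto
some path to a different sink `j'`, some path to `j'` is assigned the same stream
(decodability). -/
def IsSatDecodable (t n : ℕ) (nj : Fin t → ℕ)
    (R : (j : Fin t) → Fin (nj j) → Fin t → Prop)
    (f : (j : Fin t) → Fin (nj j) → Fin n) : Prop :=
  (∀ j, Function.Injective (f j)) ∧
    ∀ (j j' : Fin t) (k : Fin (nj j)), j ≠ j' → R j k j' →
      ∃ k' : Fin (nj j'), f j' k' = f j k

/-- `Ĝ` admits a proper `n`-coloring iff a saturating decodable stream assignment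
exists; moreover any proper `n`-coloring `c` of `Ĝ` yields the saturating decodable
stream assignment `(j,k) ↦ c (v_{j,k})`. -/
theorem colorable_iff_exists_satDecodable
    (t n : ℕ) (ht : 1 ≤ t) (nj : Fin t → ℕ) (hnj : ∀ j, 1 ≤ nj j)
    (hn : n = Finset.univ.sup nj)
    (R : (j : Fin t) → Fin (nj j) → Fin t → Prop) :
    ((coloringGraph t n nj R).Colorable n ↔
      ∃ f : (j : Fin t) → Fin (nj j) → Fin n, IsSatDecodable t n nj R f) ∧
    ∀ c : (coloringGraph t n nj R).Coloring (Fin n),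
      IsSatDecodable t n nj R (fun j k => c ⟨j, Sum.inl k⟩) := by

  have hle : ∀ j, nj j ≤ n := fun j => hn ▸ Finset.le_sup (Finset.mem_univ j)
  have key : ∀ c : (coloringGraph t n nj R).Coloring (Fin n),
      IsSatDecodable t n nj R (fun j k => c ⟨j, Sum.inl k⟩) := by
    intro c
    constructor
    · intro j k k' h
      by_contra hne
      have hadj : (coloringGraph t n nj R).Adj ⟨j, Sum.inl k⟩ ⟨j, Sum.inl k'⟩ := by
        refine ⟨?_, Or.inl rfl⟩
        simp only [ne_eq, Sigma.mk.inj_iff, heq_eq_eq, Sum.inl.injEq]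
        tauto
      exact c.valid hadj h
    · intro j j' k hjj' hR
      -- the map x ↦ c ⟨j', x⟩ is injective hence surjective
      have hinj : Function.Injective (fun x : Fin (nj j') ⊕ Fin (n - nj j') => c ⟨j', x⟩) := by
        intro a b hab
        by_contra hab'
        have hadj : (coloringGraph t n nj R).Adj ⟨j', a⟩ ⟨j', b⟩ := by
          refine ⟨?_, Or.inl rfl⟩
          simp only [ne_eq, Sigma.mk.inj_iff, heq_eq_eq]
          tauto
        exact c.valid hadj hab
      have hcard : Fintype.card (Fin (nj j') ⊕ Fin (n - nj j')) = Fintype.card (Fin n) := by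
        simp [Nat.add_sub_cancel' (hle j')]
      have hsurj : Function.Surjective (fun x : Fin (nj j') ⊕ Fin (n - nj j') => c ⟨j', x⟩) :=
        ((Fintype.bijective_iff_injective_and_card _).mpr ⟨hinj, hcard⟩).2
      obtain ⟨x, hx⟩ := hsurj (c ⟨j, Sum.inl k⟩)
      cases x with
      | inl k' => exact ⟨k', hx⟩
      | inr k'' =>
        exfalso
        have hadj : (coloringGraph t n nj R).Adj ⟨j, Sum.inl k⟩ ⟨j', Sum.inr k''⟩ := by
          refine ⟨?_, Or.inr (Or.inl ⟨hjj', ⟨k, rfl, hR⟩, ⟨k'', rfl⟩⟩)⟩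
          intro h
          exact hjj' (congrArg Sigma.fst h)
        exact c.valid hadj hx.symm
    
  refine ⟨⟨?_, ?_⟩, key⟩
  · rintro ⟨c⟩
    exact ⟨_, key c⟩
  · rintro ⟨f, hf_inj, hf_dec⟩
    -- build a coloring
    have hScard : ∀ j, (Finset.univ \ Finset.univ.image (f j)).card = n - nj j := by
      intro j
      rw [Finset.card_sdiff_of_subset (Finset.subset_univ _), Finset.card_univ,
        Finset.card_image_of_injective _ (hf_inj j)]
      simp
    set g : (j : Fin t) → Fin (n - nj j) → Fin n :=
      fun j k => ((Finset.univ \ Finset.univ.image (f j)).orderIsoOfFin (hScard j) k : Fin n)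
      with hg
    have hgmem : ∀ j k, g j k ∉ Finset.univ.image (f j) := by
      intro j k
      have := ((Finset.univ \ Finset.univ.image (f j)).orderIsoOfFin (hScard j) k).2
      rw [Finset.mem_sdiff] at this
      exact this.2
    have hginj : ∀ j, Function.Injective (g j) := by
      intro j a b hab
      have := Subtype.ext hab
      simpa using ((Finset.univ \ Finset.univ.image (f j)).orderIsoOfFin (hScard j)).injective this
    refine SimpleGraph.Colorable.mono_left (le_refl _) ?_
    refine ⟨⟨fun x => Sum.elim (f x.1) (g x.1) x.2, ?_⟩⟩
    rintro ⟨jx, xv⟩ ⟨jy, yv⟩ ⟨hne, hcase⟩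
    have cross_ne : ∀ (a b : ColoringVertex t nj n), cross R a b →
        Sum.elim (f a.1) (g a.1) a.2 ≠ Sum.elim (f b.1) (g b.1) b.2 := by
      rintro ⟨ja, av⟩ ⟨jb, bv⟩ ⟨hab, ⟨k, hk, hRab⟩, ⟨k', hk'⟩⟩
      dsimp only at hab hRab hk hk' ⊢
      rw [hk, hk']
      simp only [Sum.elim_inl, Sum.elim_inr]
      obtain ⟨k2, hk2⟩ := hf_dec ja jb k hab hRab
      intro h
      exact hgmem jb k' (h ▸ hk2 ▸ Finset.mem_image_of_mem _ (Finset.mem_univ k2))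
    rcases hcase with h | h | h
    · -- same sink
      dsimp only at h
      subst h
      have hvne : xv ≠ yv := by
        intro h; exact hne (by rw [h])
      cases xv with
      | inl k =>
        cases yv with
        | inl k' =>
          simp only [Sum.elim_inl]
          intro h
          exact hvne (by rw [hf_inj jx h])
        | inr k' =>
          simp only [Sum.elim_inl, Sum.elim_inr]
          intro h
          exact hgmem jx k' (h ▸ Finset.mem_image_of_mem _ (Finset.mem_univ k))
      | inr k =>
        cases yv with
        | inl k' =>
          simp only [Sum.elim_inl, Sum.elim_inr]
          intro h
          exact hgmem jx k (h.symm ▸ Finset.mem_image_of_mem _ (Finset.mem_univ k'))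
        | inr k' =>
          simp only [Sum.elim_inr]
          intro h
          exact hvne (by rw [hginj jx h])
    · exact cross_ne _ _ h
    · exact (cross_ne _ _ h).symm
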